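/- arXiv:2207.06840 — 2 statements merged into one kernel-verified Lean document; each statement's English description precedes it below -/
import Mathlib

section
/- Let G be an abelian group acting by homeomorphisms on a nonempty Hausdorff topological space X such that every G-orbit is dense in X. Suppose the action is essentially free, i.e. for every g ≠ 1 in G the fixed-point set {x ∈ X : g • x = x} has empty interior. Then the action is free: for every g in G and x in X, g • x = x implies g = 1. -/
/-- An essentially free minimal action of an abelian group by homeomorphisms
on a nonempty Hausdorff space is free. -/
theorem essentiallyFree_minimal_action_is_free
    {G X : Type*} [CommGroup G] [TopologicalSpace X] [T2Space X]
    [MulAction G X] [ContinuousConstSMul G X] [Nonempty X]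
    (hmin : ∀ x : X, Dense (MulAction.orbit G x))
    (hess : ∀ g : G, g ≠ 1 → interior {x : X | g • x = x} = ∅) :
    ∀ (g : G) (x : X), g • x = x → g = 1 := by
  intro g x hgx
  by_contra hg
  have hclosed : IsClosed {x : X | g • x = x} :=
    isClosed_eq (continuous_const_smul g) continuous_id
  have horb : MulAction.orbit G x ⊆ {x : X | g • x = x} := by
    rintro _ ⟨h, rfl⟩
    show g • h • x = h • x
    rw [smul_comm, hgx]
  have hall : {x : X | g • x = x} = Set.univ := by
    have hd := (hmin x).mono horb
    rw [← hclosed.closure_eq, hd.closure_eq]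
  have := hess g hg
  rw [hall, interior_univ] at this
  exact (Set.univ_nonempty).ne_empty this
end

section
/- Let X be a compact Hausdorff space and T : X → X a homeomorphism. Let a : X × ℝ → ℝ be a continuous function satisfying a(x, t + 1) = a(T(x), t) for all x ∈ X and t ∈ ℝ. Then the following are equivalent: (i) there exists a continuous function b : X × ℝ → ℝ with b(x, t + 1) = b(T(x), t) for all x, t, such that for every x the function t ↦ b(x, t) is differentiable with derivative a(x, t) at every t; (ii) there exists a continuous function f : X → ℝ such that ∫₀¹ a(x, t) dt = f(T(x)) − f(x) for all x ∈ X. (This realizes the identification of the top tangential de Rham cohomology of the mapping torus of T with the coinvariants C(X, ℝ)/{f∘T − f}: the equivariant function a represents a tangential 1-form a(x,t)dt, and it is a tangential coboundary exactly when its leafwise integral is a coboundary for T.) -/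
open MeasureTheory intervalIntegral

/-- for a homeomorphism `T` of a compact Hausdorff space `X` and a continuous
`a : X × ℝ → ℝ` with `a(x, t+1) = a(T x, t)`, the following are equivalent:
(i) `a` is a tangential coboundary, i.e. `a = ∂b/∂t` for a continuous equivariant
`b : X × ℝ → ℝ`; (ii) the leafwise integral `∫₀¹ a(x,t) dt` is a coboundary for `T`,
i.e. equals `f(T x) - f(x)` for some continuous `f : X → ℝ`. -/
theorem tangential_coboundary_iff_integral_coboundary
    {X : Type*} [TopologicalSpace X] [CompactSpace X] [T2Space X]
    (T : X ≃ₜ X) (a : X × ℝ → ℝ) (ha : Continuous a)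
    (heq : ∀ (x : X) (t : ℝ), a (x, t + 1) = a (T x, t)) :
    (∃ b : X × ℝ → ℝ, Continuous b ∧ (∀ (x : X) (t : ℝ), b (x, t + 1) = b (T x, t)) ∧
        ∀ (x : X) (t : ℝ), HasDerivAt (fun τ : ℝ => b (x, τ)) (a (x, t)) t) ↔
      (∃ f : X → ℝ, Continuous f ∧
        ∀ x : X, (∫ t in (0 : ℝ)..1, a (x, t)) = f (T x) - f x) := by
  have hax : ∀ x : X, Continuous fun t : ℝ => a (x, t) := fun x =>
    ha.comp (continuous_const.prodMk continuous_id)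
  constructor
  · rintro ⟨b, hb, hbeq, hbd⟩
    refine ⟨fun x => b (x, 0), hb.comp (continuous_id.prodMk continuous_const), fun x => ?_⟩
    have h1 : (∫ t in (0:ℝ)..1, a (x, t)) = b (x, 1) - b (x, 0) :=
      intervalIntegral.integral_eq_sub_of_hasDerivAt (fun t _ => hbd x t)
        ((hax x).intervalIntegrable 0 1)
    simp only [h1, ← hbeq x 0, zero_add]
  · rintro ⟨f, hf, hfeq⟩
    refine ⟨fun p => (∫ t in (0:ℝ)..p.2, a (p.1, t)) + f p.1, ?_, ?_, ?_⟩
    · exact (continuous_parametric_primitive_of_continuous (f := fun x t => a (x, t)) ha).add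
        (hf.comp continuous_fst)
    · intro x t
      have hsub : (∫ s in (0:ℝ)..t, a (T x, s)) = ∫ s in (1:ℝ)..t + 1, a (x, s) := by
        have := intervalIntegral.integral_comp_add_right (a := (0:ℝ)) (b := t)
          (fun s => a (x, s)) 1
        rw [zero_add] at this
        rw [← this]
        exact intervalIntegral.integral_congr fun s _ => (heq x s).symm
      have hsplit : (∫ s in (0:ℝ)..t + 1, a (x, s)) =
          (∫ s in (0:ℝ)..1, a (x, s)) + ∫ s in (1:ℝ)..t + 1, a (x, s) :=
        (intervalIntegral.integral_add_adjacent_intervals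
          ((hax x).intervalIntegrable 0 1) ((hax x).intervalIntegrable 1 (t + 1))).symm
      simp only [hsub, hsplit, hfeq x]
      ring
    · intro x t
      have := intervalIntegral.integral_hasDerivAt_right
        ((hax x).intervalIntegrable 0 t)
        ((hax x).aestronglyMeasurable.stronglyMeasurableAtFilter)
        (hax x).continuousAt
      simpa using this.add_const (f x)
end
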